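/- Consider the LP: maximize ∑_{i,j∈{0,1,2}} δ_{ij}σ_{ij}² over δ_{ij} ≥ 0 with ∑_{i,j}δ_{ij} ≤ 1 and the flow balance constraints ∑_{i}δ_{ik}σ_{ik}² = ∑_{j}δ_{kj}σ_{kj}² for k = 0,1,2 (all σ_{ij}² > 0). Its optimal value equals max{σ₁₁², σ₀₀², σ₂₂², M(σ₁₀²,σ₀₁²), M(σ₂₀²,σ₀₂²), M(σ₁₂²,σ₂₁²), M(σ₁₀²,σ₀₂²,σ₂₁²), M(σ₂₀²,σ₀₁²,σ₁₂²)}, where M denotes the harmonic mean. -/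

import Mathlib

set_option maxHeartbeats 1000000 in
/-- Identical-layers LP (Theorem 2): with flow balance, the optimal value is the maximum over
the eight cyclic communication modes, each valued by the harmonic mean of its link
parameters. Here `s i j` denotes `σᵢⱼ²`, `M2`/`M3` are harmonic means of two/three numbers. -/
theorem stmt16 (s : Fin 3 → Fin 3 → ℝ) (hs : ∀ i j, 0 < s i j)
    (M2 : ℝ → ℝ → ℝ) (hM2 : ∀ a b, M2 a b = 2 * a * b / (a + b))
    (M3 : ℝ → ℝ → ℝ → ℝ) (hM3 : ∀ a b c, M3 a b c = 3 / (a⁻¹ + b⁻¹ + c⁻¹)) :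
    IsGreatest {r : ℝ | ∃ δ : Fin 3 → Fin 3 → ℝ,
        (∀ i j, 0 ≤ δ i j) ∧ (∑ i, ∑ j, δ i j) ≤ 1 ∧
        (∀ k, ∑ i, δ i k * s i k = ∑ j, δ k j * s k j) ∧
        r = ∑ i, ∑ j, δ i j * s i j}
      (max (max (max (s 1 1) (max (s 0 0) (s 2 2)))
            (max (M2 (s 1 0) (s 0 1)) (max (M2 (s 2 0) (s 0 2)) (M2 (s 1 2) (s 2 1)))))
        (max (M3 (s 1 0) (s 0 2) (s 2 1)) (M3 (s 2 0) (s 0 1) (s 1 2)))) := by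
  have h00 := hs 0 0; have h01 := hs 0 1; have h02 := hs 0 2
  have h10 := hs 1 0; have h11 := hs 1 1; have h12 := hs 1 2
  have h20 := hs 2 0; have h21 := hs 2 1; have h22 := hs 2 2
  set S : Set ℝ := {r : ℝ | ∃ δ : Fin 3 → Fin 3 → ℝ,
        (∀ i j, 0 ≤ δ i j) ∧ (∑ i, ∑ j, δ i j) ≤ 1 ∧
        (∀ k, ∑ i, δ i k * s i k = ∑ j, δ k j * s k j) ∧
        r = ∑ i, ∑ j, δ i j * s i j} with hS
  have m00 : s 0 0 ∈ S := by
    refine ⟨![![1, 0, 0], ![0, 0, 0], ![0, 0, 0]], ?_, ?_, ?_, ?_⟩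
    · intro i j; fin_cases i <;> fin_cases j <;> simp [Matrix.vecHead, Matrix.vecTail]
    · simp [Fin.sum_univ_three, Matrix.vecHead, Matrix.vecTail]
    · intro k; fin_cases k <;> simp [Fin.sum_univ_three, Matrix.vecHead, Matrix.vecTail]
    · simp [Fin.sum_univ_three, Matrix.vecHead, Matrix.vecTail]
  have m11 : s 1 1 ∈ S := by
    refine ⟨![![0, 0, 0], ![0, 1, 0], ![0, 0, 0]], ?_, ?_, ?_, ?_⟩
    · intro i j; fin_cases i <;> fin_cases j <;> simp [Matrix.vecHead, Matrix.vecTail]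
    · simp [Fin.sum_univ_three, Matrix.vecHead, Matrix.vecTail]
    · intro k; fin_cases k <;> simp [Fin.sum_univ_three, Matrix.vecHead, Matrix.vecTail]
    · simp [Fin.sum_univ_three, Matrix.vecHead, Matrix.vecTail]
  have m22 : s 2 2 ∈ S := by
    refine ⟨![![0, 0, 0], ![0, 0, 0], ![0, 0, 1]], ?_, ?_, ?_, ?_⟩
    · intro i j; fin_cases i <;> fin_cases j <;> simp [Matrix.vecHead, Matrix.vecTail]
    · simp [Fin.sum_univ_three, Matrix.vecHead, Matrix.vecTail]
    · intro k; fin_cases k <;> simp [Fin.sum_univ_three, Matrix.vecHead, Matrix.vecTail]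
    · simp [Fin.sum_univ_three, Matrix.vecHead, Matrix.vecTail]
  have m2a : M2 (s 1 0) (s 0 1) ∈ S := by
    refine ⟨![![0, M2 (s 1 0) (s 0 1) / (2 * s 0 1), 0],
              ![M2 (s 1 0) (s 0 1) / (2 * s 1 0), 0, 0],
              ![0, 0, 0]], ?_, ?_, ?_, ?_⟩
    · intro i j; fin_cases i <;> fin_cases j <;>
        simp [Matrix.vecHead, Matrix.vecTail] <;> rw [hM2] <;> positivity
    · apply le_of_eq
      simp [Fin.sum_univ_three, Matrix.vecHead, Matrix.vecTail]
      rw [hM2]; field_simp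
    · intro k; fin_cases k <;> simp [Fin.sum_univ_three, Matrix.vecHead, Matrix.vecTail] <;>
        rw [hM2] <;> · field_simp <;> ring
    · simp [Fin.sum_univ_three, Matrix.vecHead, Matrix.vecTail]
      rw [hM2]; field_simp; ring
  have m2b : M2 (s 2 0) (s 0 2) ∈ S := by
    refine ⟨![![0, 0, M2 (s 2 0) (s 0 2) / (2 * s 0 2)],
              ![0, 0, 0],
              ![M2 (s 2 0) (s 0 2) / (2 * s 2 0), 0, 0]], ?_, ?_, ?_, ?_⟩
    · intro i j; fin_cases i <;> fin_cases j <;>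
        simp [Matrix.vecHead, Matrix.vecTail] <;> rw [hM2] <;> positivity
    · apply le_of_eq
      simp [Fin.sum_univ_three, Matrix.vecHead, Matrix.vecTail]
      rw [hM2]; field_simp
    · intro k; fin_cases k <;> simp [Fin.sum_univ_three, Matrix.vecHead, Matrix.vecTail] <;>
        rw [hM2] <;> · field_simp <;> ring
    · simp [Fin.sum_univ_three, Matrix.vecHead, Matrix.vecTail]
      rw [hM2]; field_simp; ring
  have m2c : M2 (s 1 2) (s 2 1) ∈ S := by
    refine ⟨![![0, 0, 0],
              ![0, 0, M2 (s 1 2) (s 2 1) / (2 * s 1 2)],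
              ![0, M2 (s 1 2) (s 2 1) / (2 * s 2 1), 0]], ?_, ?_, ?_, ?_⟩
    · intro i j; fin_cases i <;> fin_cases j <;>
        simp [Matrix.vecHead, Matrix.vecTail] <;> rw [hM2] <;> positivity
    · apply le_of_eq
      simp [Fin.sum_univ_three, Matrix.vecHead, Matrix.vecTail]
      rw [hM2]; field_simp; ring
    · intro k; fin_cases k <;> simp [Fin.sum_univ_three, Matrix.vecHead, Matrix.vecTail] <;>
        rw [hM2] <;> · field_simp <;> ring
    · simp [Fin.sum_univ_three, Matrix.vecHead, Matrix.vecTail]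
      rw [hM2]; field_simp; ring
  have m3a : M3 (s 1 0) (s 0 2) (s 2 1) ∈ S := by
    refine ⟨![![0, 0, M3 (s 1 0) (s 0 2) (s 2 1) / (3 * s 0 2)],
              ![M3 (s 1 0) (s 0 2) (s 2 1) / (3 * s 1 0), 0, 0],
              ![0, M3 (s 1 0) (s 0 2) (s 2 1) / (3 * s 2 1), 0]], ?_, ?_, ?_, ?_⟩
    · intro i j; fin_cases i <;> fin_cases j <;>
        simp [Matrix.vecHead, Matrix.vecTail] <;> rw [hM3] <;> positivity
    · apply le_of_eq
      simp [Fin.sum_univ_three, Matrix.vecHead, Matrix.vecTail]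
      rw [hM3]; field_simp; ring
    · intro k; fin_cases k <;> simp [Fin.sum_univ_three, Matrix.vecHead, Matrix.vecTail] <;>
        rw [hM3] <;> · field_simp <;> ring
    · simp [Fin.sum_univ_three, Matrix.vecHead, Matrix.vecTail]
      rw [hM3]; field_simp; ring
  have m3b : M3 (s 2 0) (s 0 1) (s 1 2) ∈ S := by
    refine ⟨![![0, M3 (s 2 0) (s 0 1) (s 1 2) / (3 * s 0 1), 0],
              ![0, 0, M3 (s 2 0) (s 0 1) (s 1 2) / (3 * s 1 2)],
              ![M3 (s 2 0) (s 0 1) (s 1 2) / (3 * s 2 0), 0, 0]], ?_, ?_, ?_, ?_⟩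
    · intro i j; fin_cases i <;> fin_cases j <;>
        simp [Matrix.vecHead, Matrix.vecTail] <;> rw [hM3] <;> positivity
    · apply le_of_eq
      simp [Fin.sum_univ_three, Matrix.vecHead, Matrix.vecTail]
      rw [hM3]; field_simp; ring
    · intro k; fin_cases k <;> simp [Fin.sum_univ_three, Matrix.vecHead, Matrix.vecTail] <;>
        rw [hM3] <;> · field_simp <;> ring
    · simp [Fin.sum_univ_three, Matrix.vecHead, Matrix.vecTail]
      rw [hM3]; field_simp; ring
  constructor
  · rcases max_choice (max (max (s 1 1) (max (s 0 0) (s 2 2)))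
            (max (M2 (s 1 0) (s 0 1)) (max (M2 (s 2 0) (s 0 2)) (M2 (s 1 2) (s 2 1)))))
        (max (M3 (s 1 0) (s 0 2) (s 2 1)) (M3 (s 2 0) (s 0 1) (s 1 2))) with h | h <;> rw [h]
    · rcases max_choice (max (s 1 1) (max (s 0 0) (s 2 2)))
          (max (M2 (s 1 0) (s 0 1)) (max (M2 (s 2 0) (s 0 2)) (M2 (s 1 2) (s 2 1)))) with h' | h' <;> rw [h']
      · rcases max_choice (s 1 1) (max (s 0 0) (s 2 2)) with h2 | h2 <;> rw [h2]
        · exact m11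
        · rcases max_choice (s 0 0) (s 2 2) with h3 | h3 <;> rw [h3]
          · exact m00
          · exact m22
      · rcases max_choice (M2 (s 1 0) (s 0 1)) (max (M2 (s 2 0) (s 0 2)) (M2 (s 1 2) (s 2 1))) with h2 | h2 <;> rw [h2]
        · exact m2a
        · rcases max_choice (M2 (s 2 0) (s 0 2)) (M2 (s 1 2) (s 2 1)) with h3 | h3 <;> rw [h3]
          · exact m2b
          · exact m2c
    · rcases max_choice (M3 (s 1 0) (s 0 2) (s 2 1)) (M3 (s 2 0) (s 0 1) (s 1 2)) with h' | h' <;> rw [h']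
      · exact m3a
      · exact m3b
  · rintro r ⟨δ, hpos, hsum, hbal, hrv⟩
    set V := (max (max (max (s 1 1) (max (s 0 0) (s 2 2)))
              (max (M2 (s 1 0) (s 0 1)) (max (M2 (s 2 0) (s 0 2)) (M2 (s 1 2) (s 2 1)))))
          (max (M3 (s 1 0) (s 0 2) (s 2 1)) (M3 (s 2 0) (s 0 1) (s 1 2)))) with hVdef
    -- the eight bounds
    have l00 : s 0 0 ≤ V := by rw [hVdef]; simp [le_max_iff]
    have l11 : s 1 1 ≤ V := by rw [hVdef]; simp [le_max_iff]
    have l22 : s 2 2 ≤ V := by rw [hVdef]; simp [le_max_iff]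
    have l2a : M2 (s 1 0) (s 0 1) ≤ V := by rw [hVdef]; simp [le_max_iff]
    have l2b : M2 (s 2 0) (s 0 2) ≤ V := by rw [hVdef]; simp [le_max_iff]
    have l2c : M2 (s 1 2) (s 2 1) ≤ V := by rw [hVdef]; simp [le_max_iff]
    have l3a : M3 (s 1 0) (s 0 2) (s 2 1) ≤ V := by rw [hVdef]; simp [le_max_iff]
    have l3b : M3 (s 2 0) (s 0 1) (s 1 2) ≤ V := by rw [hVdef]; simp [le_max_iff]
    have hV0 : 0 ≤ V := le_trans h11.le l11
    clear hVdef
    -- cycle nonnegativity of reduced costs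
    have hA : 0 ≤ (V * (s 1 0)⁻¹ - 1) + (V * (s 0 1)⁻¹ - 1) := by
      rw [hM2, div_le_iff₀ (by positivity)] at l2a
      have e : (V * (s 1 0)⁻¹ - 1) + (V * (s 0 1)⁻¹ - 1)
          = (V * s 0 1 + V * s 1 0 - 2 * (s 1 0 * s 0 1)) / (s 1 0 * s 0 1) := by
        field_simp; ring
      rw [e]; apply div_nonneg (by linarith) (by positivity)
    have hB : 0 ≤ (V * (s 2 0)⁻¹ - 1) + (V * (s 0 2)⁻¹ - 1) := by
      rw [hM2, div_le_iff₀ (by positivity)] at l2b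
      have e : (V * (s 2 0)⁻¹ - 1) + (V * (s 0 2)⁻¹ - 1)
          = (V * s 0 2 + V * s 2 0 - 2 * (s 2 0 * s 0 2)) / (s 2 0 * s 0 2) := by
        field_simp; ring
      rw [e]; apply div_nonneg (by linarith) (by positivity)
    have hC : 0 ≤ (V * (s 1 2)⁻¹ - 1) + (V * (s 2 1)⁻¹ - 1) := by
      rw [hM2, div_le_iff₀ (by positivity)] at l2c
      have e : (V * (s 1 2)⁻¹ - 1) + (V * (s 2 1)⁻¹ - 1)
          = (V * s 2 1 + V * s 1 2 - 2 * (s 1 2 * s 2 1)) / (s 1 2 * s 2 1) := by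
        field_simp; ring
      rw [e]; apply div_nonneg (by linarith) (by positivity)
    have hD : 0 ≤ (V * (s 1 0)⁻¹ - 1) + (V * (s 0 2)⁻¹ - 1) + (V * (s 2 1)⁻¹ - 1) := by
      have hp : 0 < (s 1 0)⁻¹ + (s 0 2)⁻¹ + (s 2 1)⁻¹ := by
        have := inv_pos.mpr h10; have := inv_pos.mpr h02; have := inv_pos.mpr h21; linarith
      rw [hM3, div_le_iff₀ hp] at l3a
      nlinarith [l3a]
    have hE : 0 ≤ (V * (s 2 0)⁻¹ - 1) + (V * (s 0 1)⁻¹ - 1) + (V * (s 1 2)⁻¹ - 1) := by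
      have hp : 0 < (s 2 0)⁻¹ + (s 0 1)⁻¹ + (s 1 2)⁻¹ := by
        have := inv_pos.mpr h20; have := inv_pos.mpr h01; have := inv_pos.mpr h12; linarith
      rw [hM3, div_le_iff₀ hp] at l3b
      nlinarith [l3b]
    -- potentials
    set y1 := min (V * (s 1 0)⁻¹ - 1) ((V * (s 2 0)⁻¹ - 1) + (V * (s 1 2)⁻¹ - 1)) with hy1
    set y2 := min (V * (s 2 0)⁻¹ - 1) ((V * (s 1 0)⁻¹ - 1) + (V * (s 2 1)⁻¹ - 1)) with hy2
    have p1 : y1 ≤ V * (s 1 0)⁻¹ - 1 := min_le_left _ _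
    have p2 : y2 ≤ V * (s 2 0)⁻¹ - 1 := min_le_left _ _
    have p3 : y1 ≤ y2 + (V * (s 1 2)⁻¹ - 1) := by
      have a1 : y1 ≤ (V * (s 2 0)⁻¹ - 1) + (V * (s 1 2)⁻¹ - 1) := min_le_right _ _
      have a2 : y1 ≤ V * (s 1 0)⁻¹ - 1 := min_le_left _ _
      have : y1 - (V * (s 1 2)⁻¹ - 1)
          ≤ min (V * (s 2 0)⁻¹ - 1) ((V * (s 1 0)⁻¹ - 1) + (V * (s 2 1)⁻¹ - 1)) :=
        le_min (by linarith) (by linarith [hC])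
      rw [← hy2] at this; linarith
    have p4 : y2 ≤ y1 + (V * (s 2 1)⁻¹ - 1) := by
      have a1 : y2 ≤ (V * (s 1 0)⁻¹ - 1) + (V * (s 2 1)⁻¹ - 1) := min_le_right _ _
      have a2 : y2 ≤ V * (s 2 0)⁻¹ - 1 := min_le_left _ _
      have : y2 - (V * (s 2 1)⁻¹ - 1)
          ≤ min (V * (s 1 0)⁻¹ - 1) ((V * (s 2 0)⁻¹ - 1) + (V * (s 1 2)⁻¹ - 1)) :=
        le_min (by linarith) (by linarith [hC])
      rw [← hy1] at this; linarith
    have p5 : 0 ≤ y1 + (V * (s 0 1)⁻¹ - 1) := by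
      have : -(V * (s 0 1)⁻¹ - 1)
          ≤ min (V * (s 1 0)⁻¹ - 1) ((V * (s 2 0)⁻¹ - 1) + (V * (s 1 2)⁻¹ - 1)) :=
        le_min (by linarith [hA]) (by linarith [hE])
      rw [← hy1] at this; linarith
    have p6 : 0 ≤ y2 + (V * (s 0 2)⁻¹ - 1) := by
      have : -(V * (s 0 2)⁻¹ - 1)
          ≤ min (V * (s 2 0)⁻¹ - 1) ((V * (s 1 0)⁻¹ - 1) + (V * (s 2 1)⁻¹ - 1)) :=
        le_min (by linarith [hB]) (by linarith [hD])
      rw [← hy2] at this; linarith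
    -- reduced-cost key bounds
    have mul_bound : ∀ a d : ℝ, 0 < a → d ≤ V * a⁻¹ - 1 → a * (1 + d) ≤ V := by
      intro a d ha hd
      have h2 : a * (V * a⁻¹) = V := by field_simp
      nlinarith [mul_le_mul_of_nonneg_left hd ha.le]
    have k01 : s 0 1 * (1 + (0 - y1)) ≤ V := mul_bound _ _ h01 (by linarith)
    have k02 : s 0 2 * (1 + (0 - y2)) ≤ V := mul_bound _ _ h02 (by linarith)
    have k10 : s 1 0 * (1 + (y1 - 0)) ≤ V := mul_bound _ _ h10 (by linarith)
    have k12 : s 1 2 * (1 + (y1 - y2)) ≤ V := mul_bound _ _ h12 (by linarith)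
    have k20 : s 2 0 * (1 + (y2 - 0)) ≤ V := mul_bound _ _ h20 (by linarith)
    have k21 : s 2 1 * (1 + (y2 - y1)) ≤ V := mul_bound _ _ h21 (by linarith)
    -- weighted versions
    have t00 : δ 0 0 * s 0 0 ≤ δ 0 0 * V := mul_le_mul_of_nonneg_left l00 (hpos 0 0)
    have t11 : δ 1 1 * s 1 1 ≤ δ 1 1 * V := mul_le_mul_of_nonneg_left l11 (hpos 1 1)
    have t22 : δ 2 2 * s 2 2 ≤ δ 2 2 * V := mul_le_mul_of_nonneg_left l22 (hpos 2 2)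
    have t01 : δ 0 1 * (s 0 1 * (1 + (0 - y1))) ≤ δ 0 1 * V := mul_le_mul_of_nonneg_left k01 (hpos 0 1)
    have t02 : δ 0 2 * (s 0 2 * (1 + (0 - y2))) ≤ δ 0 2 * V := mul_le_mul_of_nonneg_left k02 (hpos 0 2)
    have t10 : δ 1 0 * (s 1 0 * (1 + (y1 - 0))) ≤ δ 1 0 * V := mul_le_mul_of_nonneg_left k10 (hpos 1 0)
    have t12 : δ 1 2 * (s 1 2 * (1 + (y1 - y2))) ≤ δ 1 2 * V := mul_le_mul_of_nonneg_left k12 (hpos 1 2)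
    have t20 : δ 2 0 * (s 2 0 * (1 + (y2 - 0))) ≤ δ 2 0 * V := mul_le_mul_of_nonneg_left k20 (hpos 2 0)
    have t21 : δ 2 1 * (s 2 1 * (1 + (y2 - y1))) ≤ δ 2 1 * V := mul_le_mul_of_nonneg_left k21 (hpos 2 1)
    -- expand sums
    simp only [Fin.sum_univ_three] at hsum hrv
    have hb1 := hbal 1; have hb2 := hbal 2
    simp only [Fin.sum_univ_three] at hb1 hb2
    have hz : (δ 0 1 * s 0 1) * (0 - y1) + (δ 0 2 * s 0 2) * (0 - y2)
        + (δ 1 0 * s 1 0) * (y1 - 0) + (δ 1 2 * s 1 2) * (y1 - y2)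
        + (δ 2 0 * s 2 0) * (y2 - 0) + (δ 2 1 * s 2 1) * (y2 - y1) = 0 := by
      linear_combination (-y1) * hb1 + (-y2) * hb2
    have hsV : (δ 0 0 + δ 0 1 + δ 0 2 + δ 1 0 + δ 1 1 + δ 1 2 + δ 2 0 + δ 2 1 + δ 2 2) * V
        ≤ 1 * V := mul_le_mul_of_nonneg_right (by linarith [hsum]) hV0
    linarith [t00, t01, t02, t10, t11, t12, t20, t21, t22, hz, hsV, hrv]
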